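/- arXiv:1201.1323 — 2 statements merged into one kernel-verified Lean document; each statement's English description precedes it below -/
import Mathlib

section
/- Fix an integer k ≥ 1. Then R_n^{(k,0,0,0)}(x) = n! for all n ≤ k, and for every s ≥ 1, R_{k+s}^{(k,0,0,0)}(x) = k! · Π_{i=1}^{s} (k + i·x). -/
/-- The number of points in quadrant I relative to position `i`:
indices `j > i` with `σ j > σ i`. -/
def quad1 {n : ℕ} (σ : Equiv.Perm (Fin n)) (i : Fin n) : ℕ :=
  (Finset.univ.filter (fun j => i < j ∧ σ i < σ j)).card

/-- The number of indices `i` such that `σ i` matches the simple marked mesh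
pattern `MMP(k,0,0,0)`, i.e. there are at least `k` points in quadrant I. -/
def mmpK {n : ℕ} (k : ℕ) (σ : Equiv.Perm (Fin n)) : ℕ :=
  (Finset.univ.filter (fun i => k ≤ quad1 σ i)).card

/-- `R_n^{(k,0,0,0)}(x) = Σ_{σ ∈ S_n} x^{mmp^{(k,0,0,0)}(σ)}`. -/
noncomputable def R (k n : ℕ) : Polynomial ℤ :=
  ∑ σ : Equiv.Perm (Fin n), Polynomial.X ^ mmpK k σ

open Equiv Finset Polynomial

namespace MMPaux

variable {n : ℕ}

/-- Insert a new minimal value at position `p` (more precisely: `p` becomes the value at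
position `0` and the remaining values are relabelled monotonically by `succAbove p`). -/
def ins (p : Fin (n + 1)) (τ : Perm (Fin n)) : Perm (Fin (n + 1)) :=
  (Fin.cycleRange p)⁻¹ * Equiv.Perm.decomposeFin.symm (0, τ)

lemma ins_zero (p : Fin (n + 1)) (τ : Perm (Fin n)) : ins p τ 0 = p := by
  simp [ins, Perm.mul_apply, Equiv.Perm.decomposeFin_symm_apply_zero, Equiv.Perm.inv_def]

lemma ins_succ (p : Fin (n + 1)) (τ : Perm (Fin n)) (i : Fin n) :
    ins p τ i.succ = p.succAbove (τ i) := by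
  simp [ins, Perm.mul_apply, Equiv.Perm.decomposeFin_symm_apply_succ, Equiv.swap_self,
    Equiv.Perm.inv_def]

lemma ins_injective :
    Function.Injective (fun x : Fin (n + 1) × Perm (Fin n) => ins x.1 x.2) := by
  rintro ⟨p, τ⟩ ⟨q, ρ⟩ h
  simp only at h
  have hp : p = q := by rw [← ins_zero p τ, h, ins_zero]
  subst hp
  have hτ : τ = ρ := Equiv.ext fun i => by
    have h2 := congrArg (fun σ : Perm (Fin (n + 1)) => σ i.succ) h
    simp only [ins_succ] at h2
    exact Fin.succAbove_right_injective h2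
  rw [hτ]

lemma ins_bijective :
    Function.Bijective (fun x : Fin (n + 1) × Perm (Fin n) => ins x.1 x.2) := by
  rw [Fintype.bijective_iff_injective_and_card]
  refine ⟨ins_injective, ?_⟩
  simp [Fintype.card_perm, Nat.factorial_succ]

lemma card_filter_val (m : ℕ) (P : ℕ → Prop) [DecidablePred P] :
    (Finset.univ.filter (fun v : Fin m => P v.val)).card = ((Finset.Iio m).filter P).card := by
  rw [← Fin.map_valEmbedding_univ, Finset.filter_map, Finset.card_map]
  rfl

lemma quad1_ins_zero (p : Fin (n + 1)) (τ : Perm (Fin n)) :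
    quad1 (ins p τ) 0 = n - p.val := by
  unfold quad1
  rw [Finset.card_filter, Fin.sum_univ_succ]
  simp only [lt_irrefl, false_and, if_false, zero_add, Fin.succ_pos, true_and,
    ins_zero, ins_succ]
  rw [Equiv.sum_comp τ (fun v => if p < p.succAbove v then 1 else 0)]
  have hcond : ∀ v : Fin n, (p < p.succAbove v) ↔ p.val ≤ v.val := by
    intro v
    rw [Fin.lt_succAbove_iff_le_castSucc]
    simp [Fin.le_def]
  simp only [hcond]
  rw [← Finset.card_filter, card_filter_val n (fun m => p.val ≤ m)]
  have : (Finset.Iio n).filter (fun m => p.val ≤ m) = Finset.Ico p.val n := by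
    ext a
    simp only [Finset.mem_filter, Finset.mem_Iio, Finset.mem_Ico]
    omega
  rw [this, Nat.card_Ico]

lemma quad1_ins_succ (p : Fin (n + 1)) (τ : Perm (Fin n)) (i : Fin n) :
    quad1 (ins p τ) i.succ = quad1 τ i := by
  unfold quad1
  rw [Finset.card_filter, Fin.sum_univ_succ, Finset.card_filter]
  simp [ins_succ, Fin.succ_lt_succ_iff, Fin.succAbove_lt_succAbove_iff]

lemma mmpK_ins (k : ℕ) (p : Fin (n + 1)) (τ : Perm (Fin n)) :
    mmpK k (ins p τ) = (if k ≤ n - p.val then 1 else 0) + mmpK k τ := by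
  unfold mmpK
  rw [Finset.card_filter, Fin.sum_univ_succ, Finset.card_filter]
  simp [quad1_ins_zero, quad1_ins_succ]

lemma R_succ (k : ℕ) :
    R k (n + 1) =
      (∑ p : Fin (n + 1), (X : Polynomial ℤ) ^ (if k ≤ n - p.val then 1 else 0)) * R k n := by
  unfold R
  rw [← Fintype.sum_bijective _ ins_bijective _ (fun σ => (X : Polynomial ℤ) ^ mmpK k σ)
    (fun x => rfl)]
  rw [Fintype.sum_prod_type, Fintype.sum_mul_sum]
  refine Finset.sum_congr rfl fun p _ => Finset.sum_congr rfl fun τ _ => ?_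
  dsimp only
  rw [mmpK_ins, pow_add]

lemma sum_ind_lt (k : ℕ) (h : n < k) :
    (∑ p : Fin (n + 1), (X : Polynomial ℤ) ^ (if k ≤ n - p.val then 1 else 0)) =
      ((n + 1 : ℕ) : Polynomial ℤ) := by
  have hc : ∀ p : Fin (n + 1), ¬ k ≤ n - p.val := by
    intro p; omega
  simp [hc]

lemma sum_ind_ge (k : ℕ) (h : k ≤ n) :
    (∑ p : Fin (n + 1), (X : Polynomial ℤ) ^ (if k ≤ n - p.val then 1 else 0)) =
      (k : Polynomial ℤ) + ((n + 1 - k : ℕ) : Polynomial ℤ) * X := by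
  have hsplit : (∑ p : Fin (n + 1), (X : Polynomial ℤ) ^ (if k ≤ n - p.val then 1 else 0)) =
      ∑ p : Fin (n + 1), (if k ≤ n - p.val then (X : Polynomial ℤ) else 1) := by
    refine Finset.sum_congr rfl fun p _ => ?_
    split_ifs <;> simp
  rw [hsplit, Finset.sum_ite, Finset.sum_const, Finset.sum_const]
  have hcard1 : (Finset.univ.filter (fun p : Fin (n + 1) => k ≤ n - p.val)).card = n + 1 - k := by
    rw [card_filter_val (n + 1) (fun m => k ≤ n - m)]
    have : (Finset.Iio (n + 1)).filter (fun m => k ≤ n - m) = Finset.Iio (n + 1 - k) := by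
      ext a
      simp only [Finset.mem_filter, Finset.mem_Iio]
      omega
    rw [this, Nat.card_Iio]
  have hcard2 :
      (Finset.univ.filter (fun p : Fin (n + 1) => ¬ k ≤ n - p.val)).card = k := by
    have := Finset.card_filter_add_card_filter_not
      (s := (Finset.univ : Finset (Fin (n + 1)))) (p := fun p : Fin (n + 1) => k ≤ n - p.val)
    simp only [Finset.card_univ, Fintype.card_fin] at this
    omega
  rw [hcard1, hcard2]
  simp [nsmul_eq_mul, mul_comm]
  ring

lemma R_le (k n : ℕ) (h : n ≤ k) : R k n = (Nat.factorial n : Polynomial ℤ) := by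
  induction n with
  | zero =>
      simp [R, mmpK]
  | succ m ih =>
      rw [R_succ, sum_ind_lt k (by omega), ih (by omega)]
      push_cast [Nat.factorial_succ]
      ring

end MMPaux

theorem stmt_1 (k : ℕ) (hk : 1 ≤ k) :
    (∀ n, n ≤ k → R k n = (Nat.factorial n : Polynomial ℤ)) ∧
    (∀ s, 1 ≤ s → R k (k + s) =
      (Nat.factorial k : Polynomial ℤ) *
        ∏ i ∈ Finset.Icc 1 s,
          ((k : Polynomial ℤ) + (i : Polynomial ℤ) * Polynomial.X)) := by
  constructor
  · exact fun n hn => MMPaux.R_le k n hn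
  · intro s hs
    induction s with
    | zero => omega
    | succ m ih =>
      rcases Nat.eq_or_lt_of_le hs with h1 | h1
      · -- m + 1 = 1, i.e. m = 0
        have hm : m = 0 := by omega
        subst hm
        show R k (k + 1) = _
        rw [MMPaux.R_succ, MMPaux.sum_ind_ge k (le_refl k), MMPaux.R_le k k (le_refl k)]
        rw [show k + 1 - k = 1 by omega]
        simp only [Finset.Icc_self, Finset.prod_singleton]
        push_cast
        ring
      · have hm : 1 ≤ m := by omega
        have step : R k (k + (m + 1)) =
            ((k : Polynomial ℤ) + ((m + 1 : ℕ) : Polynomial ℤ) * Polynomial.X) * R k (k + m) := by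
          rw [show k + (m + 1) = (k + m) + 1 by omega, MMPaux.R_succ,
            MMPaux.sum_ind_ge k (by omega), show k + m + 1 - k = m + 1 by omega]
        rw [step, ih hm, Finset.prod_Icc_succ_top (by omega : 1 ≤ m + 1)]
        push_cast
        ring
end

section
/- Fix integers a ≥ 1 and b ≥ 1. Then R_n^{(a,b,0,0)}(x,q) = [n]_q! for all n ≤ a+b, and for every s ≥ 1, R_{a+b+s}^{(a,b,0,0)}(x,q) = [a+b]_q! · Π_{i=1}^{s} ([a]_q + q^{a+i}·[b]_q + q^a·x·[i]_q). -/
/-- The variable `x` of the two-variable polynomial ring. -/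
noncomputable def xv : MvPolynomial (Fin 2) ℤ := MvPolynomial.X 0

/-- The variable `q` of the two-variable polynomial ring. -/
noncomputable def qv : MvPolynomial (Fin 2) ℤ := MvPolynomial.X 1

/-- `[m]_q = 1 + q + ⋯ + q^{m-1}`. -/
noncomputable def qNat (m : ℕ) : MvPolynomial (Fin 2) ℤ :=
  ∑ i ∈ Finset.range m, qv ^ i

/-- `[m]_q! = [1]_q [2]_q ⋯ [m]_q`, with `[0]_q! = 1`. -/
noncomputable def qFact (m : ℕ) : MvPolynomial (Fin 2) ℤ :=
  ∏ i ∈ Finset.range m, qNat (i + 1)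

/-- Number of points in quadrant II relative to `(i, σ i)`. -/
def quad2 {n : ℕ} (σ : Equiv.Perm (Fin n)) (i : Fin n) : ℕ :=
  (Finset.univ.filter (fun j => j < i ∧ σ i < σ j)).card

/-- `mmp^{(a,b,0,0)}(σ)`: the number of indices `i` with at least `a` points
in quadrant I and at least `b` points in quadrant II relative to `(i, σ i)`. -/
def mmpAB {n : ℕ} (a b : ℕ) (σ : Equiv.Perm (Fin n)) : ℕ :=
  (Finset.univ.filter (fun i => a ≤ quad1 σ i ∧ b ≤ quad2 σ i)).card

/-- `coinv(σ)`: the number of pairs `i < j` with `σ i < σ j`. -/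
def coinv {n : ℕ} (σ : Equiv.Perm (Fin n)) : ℕ :=
  (Finset.univ.filter (fun p : Fin n × Fin n => p.1 < p.2 ∧ σ p.1 < σ p.2)).card

/-- `R_n^{(a,b,0,0)}(x,q) = Σ_{σ ∈ S_n} x^{mmp^{(a,b,0,0)}(σ)} q^{coinv(σ)}`. -/
noncomputable def Rq (a b n : ℕ) : MvPolynomial (Fin 2) ℤ :=
  ∑ σ : Equiv.Perm (Fin n), xv ^ mmpAB a b σ * qv ^ coinv σ

open Finset Equiv

noncomputable def ins {n : ℕ} (p : Fin (n+1)) (τ : Equiv.Perm (Fin n)) :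
    Equiv.Perm (Fin (n+1)) :=
  (finSuccEquiv' p).trans ((τ.optionCongr).trans (finSuccEquiv n).symm)

variable {n : ℕ} (p : Fin (n+1)) (τ : Equiv.Perm (Fin n))

lemma ins_self : ins p τ p = 0 := by
  simp [ins, finSuccEquiv'_at, finSuccEquiv_symm_none]

lemma ins_succAbove (k : Fin n) : ins p τ (p.succAbove k) = (τ k).succ := by
  simp [ins, finSuccEquiv'_succAbove, finSuccEquiv_symm_some]

lemma ins_eq_zero_iff {j : Fin (n+1)} : ins p τ j = 0 ↔ j = p := by
  constructor
  · intro h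
    by_contra hj
    obtain ⟨k, rfl⟩ := Fin.exists_succAbove_eq hj
    rw [ins_succAbove] at h
    exact Fin.succ_ne_zero _ h
  · rintro rfl; exact ins_self _ τ

lemma quad1_ins_self : quad1 (ins p τ) p = n - p.val := by
  have : (Finset.univ.filter (fun j => p < j ∧ ins p τ p < ins p τ j)) = Finset.Ioi p := by
    ext j
    simp only [mem_filter, mem_univ, true_and, mem_Ioi, ins_self, and_iff_left_iff_imp]
    intro hj
    exact Fin.pos_of_ne_zero (by rw [Ne, ins_eq_zero_iff]; exact fun h => lt_irrefl _ (h ▸ hj))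
  rw [quad1, this, Fin.card_Ioi]; omega

lemma quad2_ins_self : quad2 (ins p τ) p = p.val := by
  have : (Finset.univ.filter (fun j => j < p ∧ ins p τ p < ins p τ j)) = Finset.Iio p := by
    ext j
    simp only [mem_filter, mem_univ, true_and, mem_Iio, ins_self, and_iff_left_iff_imp]
    intro hj
    exact Fin.pos_of_ne_zero (by rw [Ne, ins_eq_zero_iff]; exact fun h => lt_irrefl _ (h ▸ hj))
  rw [quad2, this, Fin.card_Iio]

lemma quad1_ins_succAbove (k : Fin n) :
    quad1 (ins p τ) (p.succAbove k) = quad1 τ k := by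
  rw [quad1, quad1]
  refine (Finset.card_bij (fun l _ => p.succAbove l) ?_ ?_ ?_).symm
  · intro l hl
    simp only [mem_filter, mem_univ, true_and] at hl ⊢
    rw [ins_succAbove, ins_succAbove]
    exact ⟨Fin.succAbove_lt_succAbove_iff.mpr hl.1, Fin.strictMono_succ.lt_iff_lt.mpr hl.2⟩
  · intro l₁ _ l₂ _ h
    exact Fin.succAbove_right_injective h
  · intro j hj
    simp only [mem_filter, mem_univ, true_and] at hj
    have hjp : j ≠ p := by
      intro h
      rw [h, ins_self] at hj
      exact Fin.not_lt_zero _ hj.2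
    obtain ⟨l, rfl⟩ := Fin.exists_succAbove_eq hjp
    refine ⟨l, ?_, rfl⟩
    simp only [mem_filter, mem_univ, true_and]
    rw [ins_succAbove, ins_succAbove] at hj
    exact ⟨Fin.succAbove_lt_succAbove_iff.mp hj.1, Fin.strictMono_succ.lt_iff_lt.mp hj.2⟩

lemma quad2_ins_succAbove (k : Fin n) :
    quad2 (ins p τ) (p.succAbove k) = quad2 τ k := by
  rw [quad2, quad2]
  refine (Finset.card_bij (fun l _ => p.succAbove l) ?_ ?_ ?_).symm
  · intro l hl
    simp only [mem_filter, mem_univ, true_and] at hl ⊢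
    rw [ins_succAbove, ins_succAbove]
    exact ⟨Fin.succAbove_lt_succAbove_iff.mpr hl.1, Fin.strictMono_succ.lt_iff_lt.mpr hl.2⟩
  · intro l₁ _ l₂ _ h
    exact Fin.succAbove_right_injective h
  · intro j hj
    simp only [mem_filter, mem_univ, true_and] at hj
    have hjp : j ≠ p := by
      intro h
      rw [h, ins_self] at hj
      exact Fin.not_lt_zero _ hj.2
    obtain ⟨l, rfl⟩ := Fin.exists_succAbove_eq hjp
    refine ⟨l, ?_, rfl⟩
    simp only [mem_filter, mem_univ, true_and]
    rw [ins_succAbove, ins_succAbove] at hj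
    exact ⟨Fin.succAbove_lt_succAbove_iff.mp hj.1, Fin.strictMono_succ.lt_iff_lt.mp hj.2⟩

lemma coinv_eq_sum_quad1 {n : ℕ} (σ : Equiv.Perm (Fin n)) :
    coinv σ = ∑ i : Fin n, quad1 σ i := by
  rw [coinv, Finset.card_eq_sum_card_fiberwise
    (f := Prod.fst) (t := Finset.univ) (fun _ _ => mem_univ _)]
  refine Finset.sum_congr rfl fun i _ => ?_
  rw [quad1]
  refine Finset.card_bij (fun pr _ => pr.2) ?_ ?_ ?_
  · intro pr hpr
    simp only [mem_filter, mem_univ, true_and] at hpr ⊢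
    rw [← hpr.2]
    exact hpr.1
  · intro pr₁ h₁ pr₂ h₂ h
    simp only [mem_filter, mem_univ, true_and] at h₁ h₂
    exact Prod.ext (h₁.2.trans h₂.2.symm) h
  · intro j hj
    simp only [mem_filter, mem_univ, true_and] at hj
    exact ⟨(i, j), by simp only [mem_filter, mem_univ, true_and]; exact ⟨hj, trivial⟩, rfl⟩

lemma coinv_ins : coinv (ins p τ) = coinv τ + (n - p.val) := by
  rw [coinv_eq_sum_quad1, coinv_eq_sum_quad1, Fin.sum_univ_succAbove _ p,
    quad1_ins_self]
  have : ∀ k : Fin n, quad1 (ins p τ) (p.succAbove k) = quad1 τ k :=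
    quad1_ins_succAbove p τ
  simp only [this]
  ring

lemma mmp_ins (a b : ℕ) : mmpAB a b (ins p τ) =
    mmpAB a b τ + (if a ≤ n - p.val ∧ b ≤ p.val then 1 else 0) := by
  rw [mmpAB, mmpAB, Finset.card_filter, Finset.card_filter,
    Fin.sum_univ_succAbove _ p, quad1_ins_self, quad2_ins_self]
  have : ∀ k : Fin n,
      (if a ≤ quad1 (ins p τ) (p.succAbove k) ∧ b ≤ quad2 (ins p τ) (p.succAbove k)
        then (1:ℕ) else 0) = if a ≤ quad1 τ k ∧ b ≤ quad2 τ k then 1 else 0 := by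
    intro k; rw [quad1_ins_succAbove, quad2_ins_succAbove]
  simp only [this]
  ring

lemma ins_bijective :
    Function.Bijective (fun pt : Fin (n+1) × Equiv.Perm (Fin n) => ins pt.1 pt.2) := by
  rw [Fintype.bijective_iff_injective_and_card]
  constructor
  · rintro ⟨p₁, τ₁⟩ ⟨p₂, τ₂⟩ h
    simp only at h
    have hp : p₁ = p₂ := by
      have h0 : ins p₂ τ₂ p₁ = 0 := by rw [← h, ins_self]
      exact (ins_eq_zero_iff p₂ τ₂).mp h0
    subst hp
    have hτ : τ₁ = τ₂ := by
      ext k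
      have := congrArg (fun σ : Equiv.Perm (Fin (n+1)) => σ (p₁.succAbove k)) h
      simp only [ins_succAbove] at this
      exact congrArg Fin.val (Fin.succ_injective _ this)
    rw [hτ]
  · simp [Fintype.card_perm, Nat.factorial_succ]

lemma Rq_succ (a b n : ℕ) : Rq a b (n+1) =
    (∑ p ∈ Finset.range (n+1), (if a ≤ n - p ∧ b ≤ p then xv else 1) * qv ^ (n - p))
      * Rq a b n := by
  rw [Rq, ← Fintype.sum_bijective _ (ins_bijective (n := n)) _ _ (fun pt => rfl)]
  rw [Fintype.sum_prod_type]
  have key : ∀ (p : Fin (n+1)) (τ : Equiv.Perm (Fin n)),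
      xv ^ mmpAB a b (ins p τ) * qv ^ coinv (ins p τ)
        = ((if a ≤ n - p.val ∧ b ≤ p.val then xv else 1) * qv ^ (n - p.val))
          * (xv ^ mmpAB a b τ * qv ^ coinv τ) := by
    intro p τ
    rw [mmp_ins, coinv_ins, pow_add, pow_add]
    split_ifs <;> ring
  simp only [key, ← Finset.mul_sum]
  rw [← Finset.sum_mul,
    Fin.sum_univ_eq_sum_range (fun p => (if a ≤ n - p ∧ b ≤ p then xv else 1) * qv ^ (n - p)), Rq]

lemma C_small {a b n : ℕ} (ha : 1 ≤ a) (hb : 1 ≤ b) (h : n + 1 ≤ a + b) :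
    (∑ p ∈ Finset.range (n+1), (if a ≤ n - p ∧ b ≤ p then xv else 1) * qv ^ (n - p))
      = qNat (n+1) := by
  have h1 : ∀ p ∈ Finset.range (n+1),
      (if a ≤ n - p ∧ b ≤ p then xv else 1) * qv ^ (n - p) = qv ^ (n - p) := by
    intro p hp
    rw [Finset.mem_range] at hp
    rw [if_neg (by omega), one_mul]
  rw [Finset.sum_congr rfl h1, qNat]
  have := Finset.sum_range_reflect (fun j => qv ^ j) (n+1)
  simpa using this

lemma C_big {a b i : ℕ} (ha : 1 ≤ a) (hb : 1 ≤ b) (hi : 1 ≤ i) :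
    (∑ p ∈ Finset.range (b + i + a),
        (if a ≤ (b + i + a - 1) - p ∧ b ≤ p then xv else 1) * qv ^ ((b + i + a - 1) - p))
      = qNat a + qv ^ (a + i) * qNat b + qv ^ a * xv * qNat i := by
  rw [show b + i + a = b + (i + a) from by omega, Finset.sum_range_add,
    Finset.sum_range_add]
  simp only [show b + (i + a) - 1 = b + i + a - 1 from by omega]
  have e1 : ∑ p ∈ Finset.range b,
      (if a ≤ (b + i + a - 1) - p ∧ b ≤ p then xv else 1) * qv ^ ((b + i + a - 1) - p)
      = qv ^ (a + i) * qNat b := by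
    have h1 : ∀ p ∈ Finset.range b,
        (if a ≤ (b + i + a - 1) - p ∧ b ≤ p then xv else 1) * qv ^ ((b + i + a - 1) - p)
        = qv ^ (a + i) * qv ^ (b - 1 - p) := by
      intro p hp
      rw [Finset.mem_range] at hp
      rw [if_neg (by omega), one_mul, ← pow_add]
      congr 1
      omega
    rw [Finset.sum_congr rfl h1, ← Finset.mul_sum,
      Finset.sum_range_reflect (fun j => qv ^ j) b, qNat]
  have e2 : ∑ p ∈ Finset.range i,
      (if a ≤ (b + i + a - 1) - (b + p) ∧ b ≤ b + p then xv else 1)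
        * qv ^ ((b + i + a - 1) - (b + p))
      = qv ^ a * xv * qNat i := by
    have h1 : ∀ p ∈ Finset.range i,
        (if a ≤ (b + i + a - 1) - (b + p) ∧ b ≤ b + p then xv else 1)
          * qv ^ ((b + i + a - 1) - (b + p))
        = xv * (qv ^ a * qv ^ (i - 1 - p)) := by
      intro p hp
      rw [Finset.mem_range] at hp
      rw [if_pos (by omega), ← pow_add]
      congr 2
      omega
    rw [Finset.sum_congr rfl h1, ← Finset.mul_sum, ← Finset.mul_sum,
      Finset.sum_range_reflect (fun j => qv ^ j) i, qNat]
    ring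
  have e3 : ∑ p ∈ Finset.range a,
      (if a ≤ (b + i + a - 1) - (b + (i + p)) ∧ b ≤ b + (i + p) then xv else 1)
        * qv ^ ((b + i + a - 1) - (b + (i + p)))
      = qNat a := by
    have h1 : ∀ p ∈ Finset.range a,
        (if a ≤ (b + i + a - 1) - (b + (i + p)) ∧ b ≤ b + (i + p) then xv else 1)
          * qv ^ ((b + i + a - 1) - (b + (i + p)))
        = qv ^ (a - 1 - p) := by
      intro p hp
      rw [Finset.mem_range] at hp
      rw [if_neg (by omega), one_mul]
      congr 1
      omega
    rw [Finset.sum_congr rfl h1,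
      Finset.sum_range_reflect (fun j => qv ^ j) a, qNat]
  rw [e1, e2, e3]
  ring

lemma Rq_zero (a b : ℕ) : Rq a b 0 = 1 := by
  rw [Rq]
  have h : ∀ σ : Equiv.Perm (Fin 0), xv ^ mmpAB a b σ * qv ^ coinv σ = 1 := by
    intro σ
    simp [mmpAB, coinv, Finset.univ_eq_empty]
  simp only [h]
  simp [Fintype.card_perm]

lemma part1 {a b : ℕ} (ha : 1 ≤ a) (hb : 1 ≤ b) :
    ∀ n, n ≤ a + b → Rq a b n = qFact n := by
  intro n
  induction n with
  | zero => intro _; rw [Rq_zero, qFact]; simp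
  | succ m ih =>
    intro h
    rw [Rq_succ, C_small ha hb h, ih (by omega), qFact, qFact,
      Finset.prod_range_succ]
    ring

lemma part2 {a b : ℕ} (ha : 1 ≤ a) (hb : 1 ≤ b) :
    ∀ s, Rq a b (a + b + s) =
      qFact (a + b) *
        ∏ i ∈ Finset.Icc 1 s,
          (qNat a + qv ^ (a + i) * qNat b + qv ^ a * xv * qNat i) := by
  intro s
  induction s with
  | zero => simp [part1 ha hb (a+b) le_rfl]
  | succ s ih =>
    have hc := C_big (a := a) (b := b) (i := s + 1) ha hb (by omega)
    rw [show b + (s+1) + a - 1 = a + b + s from by omega,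
      show b + (s+1) + a = a + b + s + 1 from by omega] at hc
    rw [show a + b + (s+1) = (a + b + s) + 1 from rfl, Rq_succ, hc, ih,
      Finset.prod_Icc_succ_top (by omega : 1 ≤ s + 1)]
    ring

theorem stmt_8 (a b : ℕ) (ha : 1 ≤ a) (hb : 1 ≤ b) :
    (∀ n, n ≤ a + b → Rq a b n = qFact n) ∧
    (∀ s, 1 ≤ s → Rq a b (a + b + s) =
      qFact (a + b) *
        ∏ i ∈ Finset.Icc 1 s,
          (qNat a + qv ^ (a + i) * qNat b + qv ^ a * xv * qNat i)) := by
  exact ⟨part1 ha hb, fun s _ => part2 ha hb s⟩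
end
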